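/- Let σ² > 0, B > 0, g̃ > 0, λ > 0, T > 0, μ ≥ 0, p_c ≥ 0, and ω, θ be reals with ω − θ > λ·σ²·ln 2/(B·g̃). Define β(x) = σ²·(2^{x/B} − 1), β'(x) = (σ²·ln 2/B)·2^{x/B}, r* = B·log₂( (ω − θ)·B·g̃ / (λ·σ²·ln 2) ), F(t, ℓ) = (ω − θ)·ℓ − (λ·t/g̃)·β(ℓ/t) − μ·t − λ·p_c·t, and φ = (λ/g̃)·( β(r*) − r*·β'(r*) ) + μ + λ·p_c. If φ ≥ 0, then F(t, ℓ) ≤ 0 for every t ∈ (0, T] and every ℓ ≥ 0, so the optimal value 0 is attained at t* = 0 (with the convention that the objective equals 0 at t = 0, ℓ = 0). -/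

import Mathlib

/-- If `ω − θ > λ·σ²·ln 2/(B·g̃)` and
`φ = (λ/g̃)·(β(r*) − r*·β'(r*)) + μ + λ·p_c ≥ 0`, where
`β(x) = σ²·(2^{x/B} − 1)`, `β'(x) = (σ²·ln 2/B)·2^{x/B}` and
`r* = B·log₂((ω − θ)·B·g̃/(λ·σ²·ln 2))`, then the per-user Lagrangian offloading
objective `F(t, ℓ) = (ω − θ)·ℓ − (λ·t/g̃)·β(ℓ/t) − μ·t − λ·p_c·t` is nonpositive
for every `t ∈ (0, T]` and `ℓ ≥ 0` (so the optimal value `0` is attained at `t* = 0`). -/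
theorem offloading_phi_nonneg_zero_time_optimal
    (σ2 B g lam T μ pc ω θ : ℝ)
    (hσ2 : 0 < σ2) (hB : 0 < B) (hg : 0 < g) (hlam : 0 < lam) (hT : 0 < T)
    (hμ : 0 ≤ μ) (hpc : 0 ≤ pc)
    (hcond : lam * σ2 * Real.log 2 / (B * g) < ω - θ)
    (rstar : ℝ)
    (hrstar : rstar = B * Real.logb 2 ((ω - θ) * B * g / (lam * σ2 * Real.log 2)))
    (φ : ℝ)
    (hφdef : φ = (lam / g) *
        ((σ2 * ((2 : ℝ) ^ (rstar / B) - 1)) -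
          rstar * ((σ2 * Real.log 2 / B) * (2 : ℝ) ^ (rstar / B))) + μ + lam * pc)
    (hφ : 0 ≤ φ) :
    ∀ t ∈ Set.Ioc (0 : ℝ) T, ∀ ℓ : ℝ, 0 ≤ ℓ →
      (ω - θ) * ℓ - (lam * t / g) * (σ2 * ((2 : ℝ) ^ (ℓ / t / B) - 1)) - μ * t -
        lam * pc * t ≤ 0 := by
  intro t ht ℓ hℓ
  obtain ⟨ht0, htT⟩ := ht
  have hlog2 : (0:ℝ) < Real.log 2 := Real.log_pos (by norm_num)
  have hωθ : 0 < ω - θ := lt_trans (by positivity) hcond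
  have hv : (0:ℝ) < (ω - θ) * B * g / (lam * σ2 * Real.log 2) := by positivity
  set x := ℓ / t with hxdef
  have hℓ' : ℓ = x * t := by rw [hxdef, div_mul_cancel₀ ℓ ht0.ne']
  set A := (2:ℝ) ^ (x / B) with hAdef
  set Ep := (2:ℝ) ^ (rstar / B) with hEpdef
  have hApos : 0 < A := Real.rpow_pos_of_pos (by norm_num) _
  have hEppos : 0 < Ep := Real.rpow_pos_of_pos (by norm_num) _
  have hE : Ep = (ω - θ) * B * g / (lam * σ2 * Real.log 2) := by
    rw [hEpdef, hrstar, mul_div_cancel_left₀ _ hB.ne']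
    exact Real.rpow_logb (by norm_num) (by norm_num) hv
  have hId : lam * σ2 * Real.log 2 * Ep = (ω - θ) * (B * g) := by
    rw [hE]; field_simp
  have hF1 : Ep + Ep * (Real.log 2 * ((x - rstar) / B)) ≤ A := by
    have h1 : (1:ℝ) + (x / B - rstar / B) * Real.log 2 ≤
        (2:ℝ) ^ (x / B - rstar / B) := by
      rw [Real.rpow_def_of_pos (by norm_num : (0:ℝ) < 2)]
      have := Real.add_one_le_exp (Real.log 2 * (x / B - rstar / B))
      nlinarith [this]
    have h2 : A = Ep * (2:ℝ) ^ (x / B - rstar / B) := by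
      rw [hAdef, hEpdef, ← Real.rpow_add (by norm_num : (0:ℝ) < 2)]
      ring_nf
    have h3 : Ep * (1 + (x / B - rstar / B) * Real.log 2) ≤
        Ep * (2:ℝ) ^ (x / B - rstar / B) :=
      mul_le_mul_of_nonneg_left h1 hEppos.le
    rw [← h2] at h3
    have e0 : Ep * (1 + (x / B - rstar / B) * Real.log 2) =
        Ep + Ep * (Real.log 2 * ((x - rstar) / B)) := by ring
    linarith [h3, e0.le, e0.ge]
  have hcoef : (lam * σ2 / g) * (Ep * (Real.log 2 * ((x - rstar) / B))) =
      (ω - θ) * (x - rstar) := by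
    have hBg : B * g ≠ 0 := by positivity
    field_simp
    linear_combination (x - rstar) * hId
  have hphi' : (ω - θ) * rstar - (lam * σ2 / g) * (Ep - 1) - μ - lam * pc = -φ := by
    rw [hφdef]
    field_simp
    linear_combination (-rstar) * hId
  have hc : (0:ℝ) ≤ lam * σ2 / g := by positivity
  have h5 : (lam * σ2 / g) * Ep + (lam * σ2 / g) * (Ep * (Real.log 2 * ((x - rstar) / B)))
      ≤ (lam * σ2 / g) * A := by
    have h := mul_le_mul_of_nonneg_left hF1 hc
    have he : (lam * σ2 / g) * (Ep + Ep * (Real.log 2 * ((x - rstar) / B))) =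
        (lam * σ2 / g) * Ep + (lam * σ2 / g) * (Ep * (Real.log 2 * ((x - rstar) / B))) := by
      ring
    linarith [h, he.ge, he.le]
  have hunit : (ω - θ) * x - (lam * σ2 / g) * (A - 1) - μ - lam * pc ≤ -φ := by
    have e1 : (lam * σ2 / g) * (A - 1) = (lam * σ2 / g) * A - (lam * σ2 / g) := by ring
    have e2 : (lam * σ2 / g) * (Ep - 1) = (lam * σ2 / g) * Ep - (lam * σ2 / g) := by ring
    linarith [h5, hcoef, hphi', e1.le, e1.ge, e2.le, e2.ge]
  rw [hℓ']
  have h6 : t * ((ω - θ) * x - (lam * σ2 / g) * (A - 1) - μ - lam * pc) ≤ t * (-φ) :=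
    mul_le_mul_of_nonneg_left hunit ht0.le
  have e3 : (ω - θ) * (x * t) - lam * t / g * (σ2 * (A - 1)) - μ * t - lam * pc * t =
      t * ((ω - θ) * x - (lam * σ2 / g) * (A - 1) - μ - lam * pc) := by ring
  have e4 : t * (-φ) = -(t * φ) := by ring
  linarith [h6, e3.le, e3.ge, e4.le, e4.ge, mul_nonneg ht0.le hφ]
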